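/- Let x be an infinite word that is n-recurrent and not ultimately periodic. If p(n+1, x) = p(n, x) + 1, then x is (n+1)-recurrent. -/

import Mathlib

open Filter

variable {A : Type*}

/-- The factor of the infinite word `x` of length `n` starting at position `j` (0-indexed). -/
def subwordAt (x : ℕ → A) (j n : ℕ) : List A := (List.range n).map fun i => x (j + i)

/-- `w` is a factor (subword) of the infinite word `x`. -/
def IsFactor (w : List A) (x : ℕ → A) : Prop := ∃ j, subwordAt x j w.length = w

/-- The subword complexity `p(n, x)`: the number of distinct length-`n` factors of `x`. -/
noncomputable def complexity (x : ℕ → A) (n : ℕ) : ℕ :=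
  Set.ncard {w : List A | w.length = n ∧ IsFactor w x}

/-- `x` is ultimately periodic. -/
def UltimatelyPeriodic (x : ℕ → A) : Prop := ∃ N T, 0 < T ∧ ∀ i ≥ N, x (i + T) = x i

/-- `w` is a left-special factor of `x`. -/
def LeftSpecial (w : List A) (x : ℕ → A) : Prop :=
  ∃ a b : A, a ≠ b ∧ IsFactor (a :: w) x ∧ IsFactor (b :: w) x

/-- `w` is a right-special factor of `x`. -/
def RightSpecial (w : List A) (x : ℕ → A) : Prop :=
  ∃ a b : A, a ≠ b ∧ IsFactor (w ++ [a]) x ∧ IsFactor (w ++ [b]) x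

/-- `w` occurs infinitely many times in `x`. -/
def OccursInfinitely (w : List A) (x : ℕ → A) : Prop :=
  {j : ℕ | subwordAt x j w.length = w}.Infinite

/-- `x` is `n`-recurrent: every length-`n` factor occurs infinitely often. -/
def NRecurrent (n : ℕ) (x : ℕ → A) : Prop :=
  ∀ j : ℕ, {i : ℕ | subwordAt x i n = subwordAt x j n}.Infinite

/-- The shift of `x` by `s` places. -/
def shiftWord (x : ℕ → A) (s : ℕ) : ℕ → A := fun i => x (s + i)

/-- `s_m`: the length of the `m`-th non-recurrent prefix of `x`. -/
noncomputable def srec (x : ℕ → A) (m : ℕ) : ℕ := sInf {s : ℕ | NRecurrent m (shiftWord x s)}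

/-- `z_m`: the maximal `m`-recurrent tail of `x`, so that `x = a_m z_m`. -/
noncomputable def ztail (x : ℕ → A) (m : ℕ) : ℕ → A := shiftWord x (srec x m)

/-- The repetition function `r(n, x)`: the least `m ≥ 1` such that
`x_{m+1} … x_{m+n} = x_{i+1} … x_{i+n}` for some `0 ≤ i < m`. -/
noncomputable def repFn (x : ℕ → A) (n : ℕ) : ℕ :=
  sInf {m : ℕ | 0 < m ∧ ∃ i < m, subwordAt x m n = subwordAt x i n}

/-- A right-special factor `w` is essential if it is a suffix of right-special
factors of every length `m ≥ |w|`. -/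
def EssentialRightSpecial (w : List A) (x : ℕ → A) : Prop :=
  RightSpecial w x ∧
    ∀ m, w.length ≤ m → ∃ W : List A, W.length = m ∧ RightSpecial W x ∧ W.drop (m - w.length) = w

/-- `C` is (the word read along) a cycle at `w` in the Rauzy graph `𝒢_n(y)`:
it has length `> n`, prefix `w`, suffix `w`, and is a factor of `y`. -/
def IsCycleAt (y : ℕ → A) (n : ℕ) (w C : List A) : Prop :=
  n < C.length ∧ C.take n = w ∧ C.drop (C.length - n) = w ∧ IsFactor C y

/-- The Rauzy graph `𝒢_n(y)` is of `∞`-shape with bi-special vertex `w`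
and the two (simple) cycles `U` and `V`. -/
def InftyShape (y : ℕ → A) (n : ℕ) (w U V : List A) : Prop :=
  w.length = n ∧ LeftSpecial w y ∧ RightSpecial w y ∧
  (∀ v : List A, v.length = n → IsFactor v y → (LeftSpecial v y ∨ RightSpecial v y) → v = w) ∧
  IsCycleAt y n w U ∧ IsCycleAt y n w V ∧ U ≠ V ∧
  (∀ j, 0 < j → j < U.length - n → (U.drop j).take n ≠ w) ∧
  (∀ j, 0 < j → j < V.length - n → (V.drop j).take n ≠ w) ∧
  (∀ v : List A, v.length = n → IsFactor v y →
    (∃ j ≤ U.length - n, (U.drop j).take n = v) ∨ (∃ j ≤ V.length - n, (V.drop j).take n = v))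

/-- The word read along the concatenated path `U V^b U`, where `U`, `V` are
cycles at a vertex of length `n` (gluing overlaps of length `n`). -/
def cyclePow (n : ℕ) (U V : List A) (b : ℕ) : List A :=
  U ++ (List.replicate b (V.drop n)).flatten ++ U.drop n

/-- The irrationality exponent of a real number, valued in `ℝ≥0∞`. -/
noncomputable def irrationalityExponent (ξ : ℝ) : ENNReal :=
  ⨆ (μ : ℝ) (_ : {q : ℕ | 0 < q ∧ ∃ p : ℤ, |ξ - p / q| < 1 / (q : ℝ) ^ μ}.Infinite),
    ENNReal.ofReal μ

lemma subwordAt_length (x : ℕ → A) (j n : ℕ) : (subwordAt x j n).length = n := by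
  simp [subwordAt]

lemma subwordAt_eq_iff (x : ℕ → A) (a b m : ℕ) :
    subwordAt x a m = subwordAt x b m ↔ ∀ i < m, x (a + i) = x (b + i) := by
  constructor
  · intro h i hi
    have := congrArg (fun l : List A => l[i]?) h
    simpa [subwordAt, hi] using this
  · intro h
    apply List.ext_getElem (by simp [subwordAt])
    intro i h1 h2
    simp only [subwordAt, List.getElem_map, List.getElem_range]
    exact h i (by simpa [subwordAt] using h1)

lemma subwordAt_take (x : ℕ → A) (j m k : ℕ) (h : k ≤ m) :
    (subwordAt x j m).take k = subwordAt x j k := by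
  simp [subwordAt, ← List.map_take, List.take_range, Nat.min_eq_left h]

lemma subwordAt_succ (x : ℕ → A) (j m : ℕ) :
    subwordAt x j (m + 1) = subwordAt x j m ++ [x (j + m)] := by
  simp [subwordAt, List.range_succ]

lemma factorSet_finite [Finite A] (x : ℕ → A) (m : ℕ) :
    {w : List A | w.length = m ∧ IsFactor w x}.Finite :=
  (List.finite_length_eq A m).subset fun w hw => hw.1

lemma mem_factorSet (x : ℕ → A) (j m : ℕ) :
    subwordAt x j m ∈ {w : List A | w.length = m ∧ IsFactor w x} :=
  ⟨subwordAt_length x j m, j, by rw [subwordAt_length]⟩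


lemma image_take_factorSet (y : ℕ → A) (m : ℕ) :
    (fun w : List A => w.take m) '' {w : List A | w.length = m + 1 ∧ IsFactor w y}
      = {w : List A | w.length = m ∧ IsFactor w y} := by
  ext v
  constructor
  · rintro ⟨w, ⟨hl, j, hj⟩, rfl⟩
    rw [hl] at hj
    subst hj
    show (subwordAt y j (m+1)).take m ∈ _
    rw [subwordAt_take y j (m+1) m (by omega)]
    exact mem_factorSet y j m
  · rintro ⟨hl, j, hj⟩
    rw [hl] at hj
    exact ⟨subwordAt y j (m+1), mem_factorSet y j (m+1),
      by show (subwordAt y j (m+1)).take m = v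
         rw [subwordAt_take y j (m+1) m (by omega), hj]⟩

lemma complexity_mono_step [Finite A] (y : ℕ → A) (m : ℕ) :
    complexity y m ≤ complexity y (m + 1) := by
  have := Set.ncard_image_le (f := fun w : List A => w.take m)
    (s := {w : List A | w.length = m + 1 ∧ IsFactor w y}) (factorSet_finite y (m+1))
  rwa [image_take_factorSet] at this

lemma periodic_of_complexity_eq [Finite A] (y : ℕ → A) (m : ℕ)
    (h : complexity y (m + 1) = complexity y m) : UltimatelyPeriodic y := by
  -- injectivity of take m on factors of length m+1
  have hinj : Set.InjOn (fun w : List A => w.take m)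
      {w : List A | w.length = m + 1 ∧ IsFactor w y} := by
    apply Set.injOn_of_ncard_image_eq _ (factorSet_finite y (m+1))
    rw [image_take_factorSet]
    exact h.symm
  -- unique extension
  have hext : ∀ a b : ℕ, subwordAt y a m = subwordAt y b m → y (a + m) = y (b + m) := by
    intro a b hab
    have h1 : subwordAt y a (m+1) = subwordAt y b (m+1) := by
      apply hinj (mem_factorSet y a (m+1)) (mem_factorSet y b (m+1))
      simpa [subwordAt_take _ _ (m+1) m (by omega)] using hab
    rw [subwordAt_succ, subwordAt_succ, hab] at h1
    have := List.append_cancel_left h1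
    simpa using this
  -- pigeonhole
  obtain ⟨a, b, hne, hab⟩ : ∃ a b : ℕ, a ≠ b ∧
      (fun j => (fun i : Fin m => y (j + i.1))) a = (fun j => (fun i : Fin m => y (j + i.1))) b := by
    obtain ⟨a, b, hne, hab⟩ := Finite.exists_ne_map_eq_of_infinite
      (fun j => (fun i : Fin m => y (j + i.1)))
    exact ⟨a, b, hne, hab⟩
  wlog hlt : a < b generalizing a b
  · exact this b a hne.symm hab.symm (by omega)
  have hsub : subwordAt y a m = subwordAt y b m := by
    rw [subwordAt_eq_iff]
    intro i hi
    exact congrFun hab ⟨i, hi⟩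
  -- propagate
  have key : ∀ t, subwordAt y (a + t) m = subwordAt y (b + t) m := by
    intro t
    induction t with
    | zero => simpa using hsub
    | succ t ih =>
      rw [subwordAt_eq_iff] at ih ⊢
      intro i hi
      have hnew : y (a + t + m) = y (b + t + m) := hext _ _ (by rw [subwordAt_eq_iff]; exact ih)
      rcases Nat.lt_or_ge (i + 1) m with hc | hc
      · have := ih (i + 1) hc
        convert this using 2 <;> omega
      · have hie : i + 1 = m := by omega
        convert hnew using 2 <;> omega
  have hall : ∀ s, y (a + s) = y (b + s) := by
    intro s
    rcases Nat.lt_or_ge s m with hs | hs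
    · exact (subwordAt_eq_iff y a b m).mp hsub s hs
    · have := hext (a + (s - m)) (b + (s - m)) (key (s - m))
      convert this using 2 <;> omega
  refine ⟨a, b - a, by omega, fun i hi => ?_⟩
  have h1 := hall (i - a)
  have e1 : a + (i - a) = i := by omega
  have e2 : b + (i - a) = i + (b - a) := by omega
  rw [e1, e2] at h1
  exact h1.symm


theorem nRecurrent_succ_of_complexity_step {A : Type*} [Fintype A] (x : ℕ → A) (n : ℕ)
    (hrec : NRecurrent n x) (hx : ¬ UltimatelyPeriodic x)
    (hp : complexity x (n + 1) = complexity x n + 1) :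
    NRecurrent (n + 1) x := by
  by_contra hcon
  simp only [NRecurrent, not_forall] at hcon
  obtain ⟨j, hj⟩ := hcon
  rw [Set.not_infinite] at hj
  obtain ⟨s, hs⟩ := hj.bddAbove
  set y : ℕ → A := fun i => x (s + 1 + i) with hy
  have hsub : ∀ i m, subwordAt y i m = subwordAt x (s + 1 + i) m := by
    intro i m
    simp [subwordAt, hy, Nat.add_assoc]
  have claimA : {w : List A | w.length = n ∧ IsFactor w y}
      = {w : List A | w.length = n ∧ IsFactor w x} := by
    ext v
    constructor
    · rintro ⟨hl, i, hi⟩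
      rw [hl] at hi
      exact ⟨hl, s + 1 + i, by rw [hl, ← hsub]; exact hi⟩
    · rintro ⟨hl, i, hi⟩
      rw [hl] at hi
      obtain ⟨i', hi', hgt⟩ := (hrec i).exists_gt s
      refine ⟨hl, i' - (s + 1), ?_⟩
      have e : s + 1 + (i' - (s + 1)) = i' := by omega
      rw [hl, hsub, e, hi']
      exact hi
  have claimB : {w : List A | w.length = n + 1 ∧ IsFactor w y}
      ⊆ {w : List A | w.length = n + 1 ∧ IsFactor w x} \ {subwordAt x j (n + 1)} := by
    rintro v ⟨hl, i, hi⟩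
    rw [hl] at hi
    rw [hsub] at hi
    refine ⟨⟨hl, s + 1 + i, by rw [hl]; exact hi⟩, ?_⟩
    intro heq
    rw [Set.mem_singleton_iff] at heq
    have : s + 1 + i ∈ {i : ℕ | subwordAt x i (n + 1) = subwordAt x j (n + 1)} := by
      rw [Set.mem_setOf_eq, hi, heq]
    have := hs this
    omega
  have c1 : complexity y n = complexity x n := by
    unfold complexity; rw [claimA]
  have c2 : complexity y (n + 1)
      ≤ ({w : List A | w.length = n + 1 ∧ IsFactor w x} \ {subwordAt x j (n + 1)}).ncard :=
    Set.ncard_le_ncard claimB ((factorSet_finite x (n + 1)).diff)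
  have c3 : ({w : List A | w.length = n + 1 ∧ IsFactor w x} \ {subwordAt x j (n + 1)}).ncard
      = complexity x (n + 1) - 1 :=
    Set.ncard_diff_singleton_of_mem (mem_factorSet x j (n + 1))
  have c4 : complexity y n ≤ complexity y (n + 1) := complexity_mono_step y n
  have heq : complexity y (n + 1) = complexity y n := by omega
  obtain ⟨N, T, hT, hper⟩ := periodic_of_complexity_eq y n heq
  refine hx ⟨s + 1 + N, T, hT, fun i hi => ?_⟩
  have h1 := hper (i - (s + 1)) (by omega)
  have e1 : s + 1 + (i - (s + 1) + T) = i + T := by omega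
  have e2 : s + 1 + (i - (s + 1)) = i := by omega
  simpa only [hy, e1, e2] using h1
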